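/- For N ≥ 2, define q(s) = (1/2)[1 + (1 - 2((N-1)/N)(1-s))/sqrt(1 - 4((N-1)/N)s(1-s))]. Then q(0) = 1/N, q(1) = 1, and q is strictly increasing on [0,1], so q(s) ∈ [1/N, 1] for all s ∈ [0,1]. -/

import Mathlib

lemma aux_h : StrictMono (fun t : ℝ => t / Real.sqrt (t^2+1)) := by
  intro a b hab
  simp only
  have hA2 : Real.sqrt (a^2+1) ^ 2 = a^2+1 := Real.sq_sqrt (by positivity)
  have hB2 : Real.sqrt (b^2+1) ^ 2 = b^2+1 := Real.sq_sqrt (by positivity)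
  have hA : 0 < Real.sqrt (a^2+1) := Real.sqrt_pos.mpr (by positivity)
  have hB : 0 < Real.sqrt (b^2+1) := Real.sqrt_pos.mpr (by positivity)
  rw [div_lt_div_iff₀ hA hB]
  rcases le_or_gt b 0 with hb0 | hb0
  · have ha0 : a < 0 := lt_of_lt_of_le hab hb0
    have h1 : 0 < -(a * Real.sqrt (b^2+1)) := by
      have := mul_pos (neg_pos.mpr ha0) hB; nlinarith
    have h2 : 0 ≤ -(b * Real.sqrt (a^2+1)) := by
      have := mul_nonneg (neg_nonneg.mpr hb0) hA.le; linarith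
    nlinarith [mul_pos hA hB]
  · rcases le_or_gt a 0 with ha0 | ha0
    · have h1 : a * Real.sqrt (b^2+1) ≤ 0 := mul_nonpos_of_nonpos_of_nonneg ha0 hB.le
      have h2 : 0 < b * Real.sqrt (a^2+1) := mul_pos hb0 hA
      linarith
    · have h1 : 0 < a * Real.sqrt (b^2+1) := mul_pos ha0 hB
      have h2 : 0 < b * Real.sqrt (a^2+1) := mul_pos hb0 hA
      nlinarith [mul_pos hA hB]

lemma aux_repr (x w : ℝ) (hw : 0 < w) :
    x / Real.sqrt (x^2 + w^2) = (x/w) / Real.sqrt ((x/w)^2 + 1) := by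
  have h1 : (x/w)^2 + 1 = (x^2 + w^2) / w^2 := by field_simp
  have hs : Real.sqrt (x^2 + w^2) ≠ 0 := by positivity
  rw [h1, Real.sqrt_div (by positivity), Real.sqrt_sq hw.le]
  field_simp

theorem stmt_8 (N : ℝ) (hN : N ≥ 2) :
    (fun s : ℝ => (1/2) * (1 + (1 - 2*((N-1)/N)*(1-s)) / Real.sqrt (1 - 4*((N-1)/N)*s*(1-s)))) 0
      = 1/N ∧
    (fun s : ℝ => (1/2) * (1 + (1 - 2*((N-1)/N)*(1-s)) / Real.sqrt (1 - 4*((N-1)/N)*s*(1-s)))) 1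
      = 1 ∧
    StrictMonoOn
      (fun s : ℝ => (1/2) * (1 + (1 - 2*((N-1)/N)*(1-s)) / Real.sqrt (1 - 4*((N-1)/N)*s*(1-s))))
      (Set.Icc 0 1) ∧
    ∀ s ∈ Set.Icc (0:ℝ) 1,
      (1/2) * (1 + (1 - 2*((N-1)/N)*(1-s)) / Real.sqrt (1 - 4*((N-1)/N)*s*(1-s)))
        ∈ Set.Icc (1/N) 1 := by
  have hN0 : (0:ℝ) < N := by linarith
  set c : ℝ := (N-1)/N with hc
  have hc1 : c < 1 := by rw [hc, div_lt_one hN0]; linarith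
  have hch : 1/2 ≤ c := by rw [hc, le_div_iff₀ hN0]; linarith
  have hcc : 0 < c * (1-c) := by nlinarith
  set k : ℝ := Real.sqrt (c*(1-c)) with hkdef
  have hk : 0 < k := Real.sqrt_pos.mpr hcc
  have hk2 : k^2 = c*(1-c) := Real.sq_sqrt hcc.le
  have hid : ∀ s : ℝ, 1 - 4*c*s*(1-s) = (1-2*c*(1-s))^2 + (2*k*(1-s))^2 := by
    intro s; linear_combination (-4*(1-s)^2) * hk2
  have hDpos : ∀ s : ℝ, 0 < 1 - 4*c*s*(1-s) := by
    intro s; nlinarith [sq_nonneg (1-2*s)]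
  have h0 : (fun s : ℝ => (1/2) * (1 + (1 - 2*c*(1-s)) / Real.sqrt (1 - 4*c*s*(1-s)))) 0
      = 1/N := by
    show (1/2) * (1 + (1 - 2*c*(1-(0:ℝ))) / Real.sqrt (1 - 4*c*0*(1-(0:ℝ)))) = 1/N
    rw [show (1:ℝ) - 4*c*0*(1-(0:ℝ)) = 1 by ring, Real.sqrt_one, div_one, hc]
    field_simp
    ring
  have h1 : (fun s : ℝ => (1/2) * (1 + (1 - 2*c*(1-s)) / Real.sqrt (1 - 4*c*s*(1-s)))) 1
      = 1 := by
    show (1/2) * (1 + (1 - 2*c*(1-(1:ℝ))) / Real.sqrt (1 - 4*c*1*(1-(1:ℝ)))) = 1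
    rw [show (1:ℝ) - 4*c*1*(1-(1:ℝ)) = 1 by ring, Real.sqrt_one]
    ring
  have hmono : StrictMonoOn
      (fun s : ℝ => (1/2) * (1 + (1 - 2*c*(1-s)) / Real.sqrt (1 - 4*c*s*(1-s))))
      (Set.Icc 0 1) := by
    intro s₁ hs₁ s₂ hs₂ h12
    simp only
    rcases eq_or_lt_of_le hs₂.2 with h2e | h2l
    · subst h2e
      have hs1lt : s₁ < 1 := h12
      have hu : (1-2*c*(1-s₁)) < Real.sqrt (1-4*c*s₁*(1-s₁)) := by
        have hsq : ((1-2*c*(1-s₁)))^2 < 1-4*c*s₁*(1-s₁) := by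
          rw [hid s₁]
          have h' : 0 < 2*k*(1-s₁) := mul_pos (by positivity) (by linarith)
          have : 0 < (2*k*(1-s₁))^2 := pow_pos h' 2
          linarith
        calc (1-2*c*(1-s₁)) ≤ |1-2*c*(1-s₁)| := le_abs_self _
          _ = Real.sqrt ((1-2*c*(1-s₁))^2) := (Real.sqrt_sq_eq_abs _).symm
          _ < _ := Real.sqrt_lt_sqrt (sq_nonneg _) hsq
      have hs : 0 < Real.sqrt (1-4*c*s₁*(1-s₁)) := Real.sqrt_pos.mpr (hDpos s₁)
      have hlt1 : (1-2*c*(1-s₁))/Real.sqrt (1-4*c*s₁*(1-s₁)) < 1 := (div_lt_one hs).mpr hu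
      rw [show (1:ℝ) - 4*c*1*(1-(1:ℝ)) = 1 by ring, Real.sqrt_one]
      rw [div_one]
      linarith
    · have hs1lt : s₁ < 1 := h12.trans h2l
      have key : ∀ s:ℝ, s < 1 → (1-2*c*(1-s))/Real.sqrt (1-4*c*s*(1-s)) =
          ((1-2*c*(1-s))/(2*k*(1-s))) / Real.sqrt (((1-2*c*(1-s))/(2*k*(1-s)))^2 + 1) := by
        intro s hs
        have hw : 0 < 2*k*(1-s) := mul_pos (by positivity) (by linarith)
        rw [hid s, aux_repr _ _ hw]
      rw [key s₁ hs1lt, key s₂ h2l]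
      have hr : (1-2*c*(1-s₁))/(2*k*(1-s₁)) < (1-2*c*(1-s₂))/(2*k*(1-s₂)) := by
        rw [div_lt_div_iff₀ (mul_pos (by positivity) (by linarith)) (mul_pos (by positivity) (by linarith))]
        have hident : (1-2*c*(1-s₂))*(2*k*(1-s₁)) - (1-2*c*(1-s₁))*(2*k*(1-s₂)) = 2*(k*(s₂-s₁)) := by ring
        have := mul_pos hk (sub_pos.mpr h12)
        linarith
      have := aux_h hr
      simp only at this
      linarith
  refine ⟨h0, h1, hmono, fun s hs => ?_⟩
  constructor
  · have hle := hmono.monotoneOn (Set.left_mem_Icc.mpr (by norm_num)) hs hs.1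
    have h0' : (1:ℝ)/2*(1+(1-2*c*(1-(0:ℝ)))/Real.sqrt (1-4*c*0*(1-(0:ℝ)))) = 1/N := h0
    rw [h0'] at hle
    exact hle
  · have hle := hmono.monotoneOn hs (Set.right_mem_Icc.mpr (by norm_num)) hs.2
    have h1' : (1:ℝ)/2*(1+(1-2*c*(1-(1:ℝ)))/Real.sqrt (1-4*c*1*(1-(1:ℝ)))) = 1 := h1
    rw [h1'] at hle
    exact hle
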